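/- Consequently, the map (Q, f) ↦ (Q, σ(f)) is an isomorphism from the G-poset of b̄-Brauer pairs to the G-poset of σ(b̄)-Brauer pairs, for any block b̄ of kG. -/

import Mathlib

/-- Coefficientwise Frobenius `σ` on a group algebra. -/
noncomputable def frobMA (p : ℕ) [hp : Fact p.Prime] {k : Type*} [Field k] {L : Type*}
    [Group L] (x : MonoidAlgebra k L) : MonoidAlgebra k L :=
  MonoidAlgebra.ofCoeff (Finsupp.mapRange (· ^ p) (zero_pow hp.out.ne_zero) x.coeff)

/-- A block of a ring: a primitive idempotent of the center. -/
def IsPrimCentralIdem {R : Type*} [Ring R] (e : R) : Prop :=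
  (∀ y : R, y * e = e * y) ∧ IsIdempotentElem e ∧ e ≠ 0 ∧
    ∀ f g : R, (∀ y : R, y * f = f * y) → (∀ y : R, y * g = g * y) →
      IsIdempotentElem f → IsIdempotentElem g → f * g = 0 → e = f + g → f = 0 ∨ g = 0

/-- `a ∈ (kG)^R`: `a` is fixed under conjugation by every element of `R`. -/
def RFixed {k : Type*} [Field k] {G : Type*} [Group G] (R : Subgroup G)
    (a : MonoidAlgebra k G) : Prop :=
  ∀ r ∈ R, ∀ g : G, a.coeff (r⁻¹ * g * r) = a.coeff g

/-- `i` is a primitive idempotent of the fixed-point algebra `(kG)^R`. -/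
def PrimFixedIdem {k : Type*} [Field k] {G : Type*} [Group G] (R : Subgroup G)
    (i : MonoidAlgebra k G) : Prop :=
  RFixed R i ∧ IsIdempotentElem i ∧ i ≠ 0 ∧
    ∀ j₁ j₂ : MonoidAlgebra k G, RFixed R j₁ → RFixed R j₂ →
      IsIdempotentElem j₁ → IsIdempotentElem j₂ →
      j₁ * j₂ = 0 → j₂ * j₁ = 0 → i = j₁ + j₂ → j₁ = 0 ∨ j₂ = 0

/-- The Brauer homomorphism as truncation `kG → kC_G(Q)`. -/
noncomputable def brauerMap {k : Type*} [Field k] {G : Type*} [Group G] (Q : Subgroup G)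
    (a : MonoidAlgebra k G) : MonoidAlgebra k ↥(Subgroup.centralizer (Q : Set G)) :=
  MonoidAlgebra.ofCoeff (Finsupp.comapDomain Subtype.val a.coeff (Subtype.val_injective.injOn))

/-- `(Q, e)` is a `b`-Brauer pair: `Q` is a `p`-subgroup of `G` and `e` is a block of
`kC_G(Q)` with `Br_Q(b) e = e`. -/
def IsBrauerPair (p : ℕ) {k : Type*} [Field k] {G : Type*} [Group G]
    (b : MonoidAlgebra k G) (Q : Subgroup G)
    (e : MonoidAlgebra k ↥(Subgroup.centralizer (Q : Set G))) : Prop :=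
  IsPGroup p Q ∧ IsPrimCentralIdem e ∧ brauerMap Q b * e = e

/-- The Alperin–Broué inclusion of Brauer pairs, via its standard characterization:
`(Q, e) ≤ (R, f)` iff `Q ≤ R` and every primitive idempotent `i` of `(kG)^R` with
`Br_R(i) f ≠ 0` satisfies `Br_Q(i) e ≠ 0`. -/
def BrauerPairLE {k : Type*} [Field k] {G : Type*} [Group G]
    (Q : Subgroup G) (e : MonoidAlgebra k ↥(Subgroup.centralizer (Q : Set G)))
    (R : Subgroup G) (f : MonoidAlgebra k ↥(Subgroup.centralizer (R : Set G))) : Prop :=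
  Q ≤ R ∧ ∀ i : MonoidAlgebra k G, PrimFixedIdem R i →
    brauerMap R i * f ≠ 0 → brauerMap Q i * e ≠ 0

/-- Conjugate of a subgroup. -/
def conjSub {G : Type*} [Group G] (g : G) (Q : Subgroup G) : Subgroup G :=
  Subgroup.map (MulAut.conj g).toMonoidHom Q

/-- Conjugation `x ↦ g x g⁻¹` maps `C_G(Q)` to `C_G(gQg⁻¹)`. -/
def conjElem {G : Type*} [Group G] (g : G) (Q : Subgroup G)
    (x : ↥(Subgroup.centralizer (Q : Set G))) :
    ↥(Subgroup.centralizer ((conjSub g Q : Subgroup G) : Set G)) :=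
  ⟨g * (x : G) * g⁻¹, by
    rw [Subgroup.mem_centralizer_iff]
    intro y hy
    rcases Subgroup.mem_map.mp hy with ⟨z, hz, rfl⟩
    have hx : z * (x : G) = (x : G) * z :=
      Subgroup.mem_centralizer_iff.mp x.2 z hz
    simp only [MulEquiv.coe_toMonoidHom, MulAut.conj_apply]
    have h1 : g * z * g⁻¹ * (g * (x : G) * g⁻¹) = g * (z * (x : G)) * g⁻¹ := by group
    have h2 : g * (x : G) * g⁻¹ * (g * z * g⁻¹) = g * ((x : G) * z) * g⁻¹ := by group
    rw [h1, h2, hx]⟩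

/-- The induced conjugation map `kC_G(Q) → kC_G(gQg⁻¹)` on group algebras. -/
noncomputable def conjMA {k : Type*} [Field k] {G : Type*} [Group G] (g : G)
    (Q : Subgroup G) (e : MonoidAlgebra k ↥(Subgroup.centralizer (Q : Set G))) :
    MonoidAlgebra k ↥(Subgroup.centralizer ((conjSub g Q : Subgroup G) : Set G)) :=
  MonoidAlgebra.ofCoeff (Finsupp.mapDomain (conjElem g Q) e.coeff)



section FrobHelpers

variable (p : ℕ) [hp : Fact p.Prime] {k : Type*} [Field k] [CharP k p]
  {L : Type*} [Group L]

lemma frobMA_apply (a : MonoidAlgebra k L) (g : L) : (frobMA p a).coeff g = (a.coeff g) ^ p :=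
  Finsupp.mapRange_apply (hf := by exact zero_pow hp.out.ne_zero)

lemma pow_p_inj : Function.Injective (fun x : k => x ^ p) := fun a b h =>
  frobenius_inj k p (by simpa [frobenius_def] using h)

lemma frobMA_injective :
    Function.Injective (frobMA p : MonoidAlgebra k L → MonoidAlgebra k L) := by
  intro a b h
  ext g
  have h' : (frobMA p a).coeff g = (frobMA p b).coeff g := by rw [h]
  exact pow_p_inj p (k := k) (by simpa [frobMA_apply] using h')

lemma frobMA_zero : frobMA p (0 : MonoidAlgebra k L) = 0 := by
  ext g; simp [frobMA_apply, zero_pow hp.out.ne_zero]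

lemma frobMA_eq_zero_iff {a : MonoidAlgebra k L} : frobMA p a = 0 ↔ a = 0 :=
  ⟨fun h => frobMA_injective p (by rw [h, frobMA_zero]), fun h => by rw [h, frobMA_zero]⟩

lemma frobMA_add (a b : MonoidAlgebra k L) :
    frobMA p (a + b) = frobMA p a + frobMA p b := by
  ext g; show ((a + b).coeff g) ^ p = (frobMA p a).coeff g + (frobMA p b).coeff g
  rw [MonoidAlgebra.coeff_add, Finsupp.add_apply, frobMA_apply, frobMA_apply, add_pow_char]

lemma frobMA_mul (a b : MonoidAlgebra k L) :
    frobMA p (a * b) = frobMA p a * frobMA p b := by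
  classical
  ext g
  rw [frobMA_apply, MonoidAlgebra.coeff_mul, MonoidAlgebra.coeff_mul]
  have hs : ∀ c : MonoidAlgebra k L, (frobMA p c).coeff.support = c.coeff.support := fun c =>
    Finsupp.support_mapRange_of_injective (by exact zero_pow hp.out.ne_zero) c.coeff (pow_p_inj p (k := k))
  simp only [Finsupp.sum, hs, frobMA_apply]
  rw [← frobenius_def, map_sum]
  refine Finset.sum_congr rfl fun x _ => ?_
  rw [map_sum]
  refine Finset.sum_congr rfl fun y _ => ?_
  simp only [apply_ite (frobenius k p), map_mul, map_zero, frobenius_def]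

variable [IsAlgClosed k]

lemma frobMA_surjective :
    Function.Surjective (frobMA p : MonoidAlgebra k L → MonoidAlgebra k L) := by
  intro y
  refine ⟨MonoidAlgebra.ofCoeff (Finsupp.mapRange (frobeniusEquiv k p).symm (map_zero _) y.coeff), ?_⟩
  ext g
  rw [frobMA_apply, MonoidAlgebra.coeff_ofCoeff, Finsupp.mapRange_apply, ← frobenius_def, ← coe_frobeniusEquiv,
    RingEquiv.apply_symm_apply]

lemma central_frobMA_iff (e : MonoidAlgebra k L) :
    (∀ y, y * e = e * y) ↔ (∀ y, y * frobMA p e = frobMA p e * y) := by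
  constructor
  · intro h y
    obtain ⟨z, rfl⟩ := frobMA_surjective p y
    rw [← frobMA_mul, ← frobMA_mul, h z]
  · intro h y
    apply frobMA_injective p
    rw [frobMA_mul, frobMA_mul, h (frobMA p y)]

lemma isIdempotentElem_frobMA_iff (e : MonoidAlgebra k L) :
    IsIdempotentElem e ↔ IsIdempotentElem (frobMA p e) := by
  unfold IsIdempotentElem
  rw [← frobMA_mul]
  exact ⟨fun h => by rw [h], fun h => frobMA_injective p h⟩

lemma isPrimCentralIdem_frobMA_iff (e : MonoidAlgebra k L) :
    IsPrimCentralIdem e ↔ IsPrimCentralIdem (frobMA p e) := by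
  constructor
  · rintro ⟨h1, h2, h3, h4⟩
    refine ⟨(central_frobMA_iff p e).mp h1, (isIdempotentElem_frobMA_iff p e).mp h2,
      fun h => h3 ((frobMA_eq_zero_iff p).mp h), ?_⟩
    intro f g hf hg hfi hgi hfg hsum
    obtain ⟨f', rfl⟩ := frobMA_surjective p f
    obtain ⟨g', rfl⟩ := frobMA_surjective p g
    have hsum' : e = f' + g' := frobMA_injective p (by rw [frobMA_add, hsum])
    have hfg' : f' * g' = 0 := frobMA_injective p (by rw [frobMA_mul, frobMA_zero, hfg])
    rcases h4 f' g' ((central_frobMA_iff p f').mpr hf) ((central_frobMA_iff p g').mpr hg)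
      ((isIdempotentElem_frobMA_iff p f').mpr hfi) ((isIdempotentElem_frobMA_iff p g').mpr hgi)
      hfg' hsum' with h | h
    · exact Or.inl (by rw [h, frobMA_zero])
    · exact Or.inr (by rw [h, frobMA_zero])
  · rintro ⟨h1, h2, h3, h4⟩
    refine ⟨(central_frobMA_iff p e).mpr h1, (isIdempotentElem_frobMA_iff p e).mpr h2,
      fun h => h3 (by rw [h, frobMA_zero]), ?_⟩
    intro f g hf hg hfi hgi hfg hsum
    rcases h4 (frobMA p f) (frobMA p g) ((central_frobMA_iff p f).mp hf)
      ((central_frobMA_iff p g).mp hg) ((isIdempotentElem_frobMA_iff p f).mp hfi)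
      ((isIdempotentElem_frobMA_iff p g).mp hgi)
      (by rw [← frobMA_mul, hfg, frobMA_zero])
      (by rw [← frobMA_add, hsum]) with h | h
    · exact Or.inl ((frobMA_eq_zero_iff p).mp h)
    · exact Or.inr ((frobMA_eq_zero_iff p).mp h)

end FrobHelpers

section GroupHelpers

variable (p : ℕ) [hp : Fact p.Prime] {k : Type*} [Field k] [CharP k p]
  {G : Type*} [Group G]

lemma brauerMap_frobMA (Q : Subgroup G) (a : MonoidAlgebra k G) :
    brauerMap Q (frobMA p a) = frobMA p (brauerMap Q a) := by
  ext g
  simp [brauerMap, MonoidAlgebra.coeff_ofCoeff, Finsupp.comapDomain_apply, frobMA_apply]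

lemma rFixed_frobMA_iff (R : Subgroup G) (a : MonoidAlgebra k G) :
    RFixed R a ↔ RFixed R (frobMA p a) := by
  constructor
  · intro h r hr g
    rw [frobMA_apply, frobMA_apply, h r hr g]
  · intro h r hr g
    exact pow_p_inj p (k := k) (by simpa [frobMA_apply] using h r hr g)

variable [IsAlgClosed k]

lemma primFixedIdem_frobMA_iff (R : Subgroup G) (i : MonoidAlgebra k G) :
    PrimFixedIdem R i ↔ PrimFixedIdem R (frobMA p i) := by
  constructor
  · rintro ⟨h1, h2, h3, h4⟩
    refine ⟨(rFixed_frobMA_iff p R i).mp h1, (isIdempotentElem_frobMA_iff p i).mp h2,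
      fun h => h3 ((frobMA_eq_zero_iff p).mp h), ?_⟩
    intro j₁ j₂ hf1 hf2 hi1 hi2 ho1 ho2 hsum
    obtain ⟨j₁', rfl⟩ := frobMA_surjective p j₁
    obtain ⟨j₂', rfl⟩ := frobMA_surjective p j₂
    rcases h4 j₁' j₂' ((rFixed_frobMA_iff p R j₁').mpr hf1) ((rFixed_frobMA_iff p R j₂').mpr hf2)
      ((isIdempotentElem_frobMA_iff p j₁').mpr hi1) ((isIdempotentElem_frobMA_iff p j₂').mpr hi2)
      (frobMA_injective p (by rw [frobMA_mul, frobMA_zero, ho1]))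
      (frobMA_injective p (by rw [frobMA_mul, frobMA_zero, ho2]))
      (frobMA_injective p (by rw [frobMA_add, hsum])) with h | h
    · exact Or.inl (by rw [h, frobMA_zero])
    · exact Or.inr (by rw [h, frobMA_zero])
  · rintro ⟨h1, h2, h3, h4⟩
    refine ⟨(rFixed_frobMA_iff p R i).mpr h1, (isIdempotentElem_frobMA_iff p i).mpr h2,
      fun h => h3 (by rw [h, frobMA_zero]), ?_⟩
    intro j₁ j₂ hf1 hf2 hi1 hi2 ho1 ho2 hsum
    rcases h4 (frobMA p j₁) (frobMA p j₂) ((rFixed_frobMA_iff p R j₁).mp hf1)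
      ((rFixed_frobMA_iff p R j₂).mp hf2) ((isIdempotentElem_frobMA_iff p j₁).mp hi1)
      ((isIdempotentElem_frobMA_iff p j₂).mp hi2)
      (by rw [← frobMA_mul, ho1, frobMA_zero]) (by rw [← frobMA_mul, ho2, frobMA_zero])
      (by rw [← frobMA_add, hsum]) with h | h
    · exact Or.inl ((frobMA_eq_zero_iff p).mp h)
    · exact Or.inr ((frobMA_eq_zero_iff p).mp h)

lemma isBrauerPair_frobMA_iff (b : MonoidAlgebra k G) (Q : Subgroup G)
    (e : MonoidAlgebra k ↥(Subgroup.centralizer (Q : Set G))) :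
    IsBrauerPair p b Q e ↔ IsBrauerPair p (frobMA p b) Q (frobMA p e) := by
  unfold IsBrauerPair
  rw [brauerMap_frobMA, ← frobMA_mul]
  refine and_congr Iff.rfl (and_congr (isPrimCentralIdem_frobMA_iff p e) ?_)
  exact ⟨fun h => by rw [h], fun h => frobMA_injective p h⟩

end GroupHelpers

/-- For a block `b̄` of `kG`, the map `(Q, e) ↦ (Q, σ(e))` is an
isomorphism of `G`-posets from the poset of `b̄`-Brauer pairs to the poset of
`σ(b̄)`-Brauer pairs: it is a bijection on Brauer pairs, it preserves and reflects the
Alperin–Broué inclusion, and it commutes with the conjugation action of `G`. -/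
theorem frobenius_isomorphism_of_brauer_pair_posets
    (p : ℕ) [Fact p.Prime] (k : Type*) [Field k] [IsAlgClosed k] [CharP k p]
    (G : Type*) [Group G] [Finite G]
    (b : MonoidAlgebra k G) (hb : IsPrimCentralIdem b) :
    (∀ (Q : Subgroup G) (e : MonoidAlgebra k ↥(Subgroup.centralizer (Q : Set G))),
      IsBrauerPair p b Q e ↔ IsBrauerPair p (frobMA p b) Q (frobMA p e)) ∧
    (∀ Q : Subgroup G,
      Set.BijOn (frobMA p)
        {e : MonoidAlgebra k ↥(Subgroup.centralizer (Q : Set G)) | IsBrauerPair p b Q e}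
        {e : MonoidAlgebra k ↥(Subgroup.centralizer (Q : Set G)) |
          IsBrauerPair p (frobMA p b) Q e}) ∧
    (∀ (Q R : Subgroup G) (e : MonoidAlgebra k ↥(Subgroup.centralizer (Q : Set G)))
        (f : MonoidAlgebra k ↥(Subgroup.centralizer (R : Set G))),
      IsBrauerPair p b Q e → IsBrauerPair p b R f →
      (BrauerPairLE Q e R f ↔ BrauerPairLE Q (frobMA p e) R (frobMA p f))) ∧
    (∀ (g : G) (Q : Subgroup G) (e : MonoidAlgebra k ↥(Subgroup.centralizer (Q : Set G))),
      frobMA p (conjMA g Q e) = conjMA g Q (frobMA p e)) := by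
  refine ⟨fun Q e => isBrauerPair_frobMA_iff p b Q e, ?_, ?_, ?_⟩
  · intro Q
    refine ⟨fun e he => (isBrauerPair_frobMA_iff p b Q e).mp he,
      (frobMA_injective p).injOn, ?_⟩
    intro e' he'
    obtain ⟨e, rfl⟩ := frobMA_surjective p e'
    exact ⟨e, (isBrauerPair_frobMA_iff p b Q e).mpr he', rfl⟩
  · intro Q R e f _ _
    unfold BrauerPairLE
    refine and_congr Iff.rfl ⟨?_, ?_⟩
    · intro h i hi hne
      obtain ⟨j, rfl⟩ := frobMA_surjective p i
      rw [brauerMap_frobMA, ← frobMA_mul, Ne, frobMA_eq_zero_iff] at hne ⊢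
      exact h j ((primFixedIdem_frobMA_iff p R j).mpr hi) hne
    · intro h i hi hne
      have hne' : brauerMap R (frobMA p i) * frobMA p f ≠ 0 := by
        rw [brauerMap_frobMA, ← frobMA_mul, Ne, frobMA_eq_zero_iff]; exact hne
      have h2 := h (frobMA p i) ((primFixedIdem_frobMA_iff p R i).mp hi) hne'
      rw [brauerMap_frobMA, ← frobMA_mul, Ne, frobMA_eq_zero_iff] at h2
      exact h2
  · intro g Q e
    exact congrArg MonoidAlgebra.ofCoeff (Finsupp.mapDomain_mapRange (conjElem g Q) e.coeff (· ^ p)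
      (by exact zero_pow (Fact.out (p := p.Prime)).ne_zero)
      (fun x y => by show (x + y) ^ p = x ^ p + y ^ p; exact add_pow_char x y p)).symm
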